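/- arXiv:1710.04385 — 4 statements merged into one kernel-verified Lean document; each statement's English description precedes it below -/
import Mathlib

section
/- Let S be a finite interval of integers containing {2p−1, 2p, …, 2q+1} for integers p ≤ q, let Q = Q[p,q] be the Nicolai supercharge on ℋ_S, and let H = Q Q* + Q* Q be the Nicolai Hamiltonian. Then for all integers k, l with p ≤ k < l ≤ q and every f ∈ Ξ̂_{k,l}, the local fermion operator Q(f) and its adjoint commute with H: H Q(f) = Q(f) H and H Q(f)* = Q(f)* H. (Finite-lattice version of: the Nicolai model possesses infinitely many hidden local fermion symmetries.) -/
namespace Nicolai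

/-- Configurations on the finite interval `S = {a, …, b}` of integers:
`true` = occupied, `false` = empty. -/
abbrev Config (a b : ℤ) : Type := {i : ℤ // i ∈ Finset.Icc a b} → Bool

/-- The Hilbert space `ℋ_S` with orthonormal basis indexed by configurations. -/
abbrev Hs (a b : ℤ) : Type := EuclideanSpace ℂ (Config a b)

/-- The basis vector `e_g` associated to the configuration `g`. -/
noncomputable def e (a b : ℤ) (g : Config a b) : Hs a b := EuclideanSpace.single g 1

/-- The Jordan–Wigner sign exponent: the number of occupied sites strictly to the left of `i`. -/
noncomputable def signCount (a b : ℤ) (g : Config a b) (i : ℤ) : ℕ :=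
  (Finset.univ.filter fun j : {x : ℤ // x ∈ Finset.Icc a b} => j.1 < i ∧ g j = true).card

/-- The annihilation operator `c_i` (zero if `i ∉ S`). -/
noncomputable def cAnn (a b : ℤ) (i : ℤ) : Module.End ℂ (Hs a b) where
  toFun ψ := WithLp.toLp 2 fun g =>
    if hi : i ∈ Finset.Icc a b then
      if g ⟨i, hi⟩ = false then
        ((-1 : ℂ) ^ signCount a b g i) * ψ (Function.update g ⟨i, hi⟩ true)
      else 0
    else 0
  map_add' ψ φ := by
    ext g
    simp only [PiLp.add_apply, PiLp.toLp_apply]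
    split_ifs <;> simp [mul_add]
  map_smul' c ψ := by
    ext g
    simp only [PiLp.smul_apply, PiLp.toLp_apply, smul_eq_mul, RingHom.id_apply]
    split_ifs <;> ring

/-- The creation operator `c*_i` (zero if `i ∉ S`). -/
noncomputable def cCr (a b : ℤ) (i : ℤ) : Module.End ℂ (Hs a b) where
  toFun ψ := WithLp.toLp 2 fun g =>
    if hi : i ∈ Finset.Icc a b then
      if g ⟨i, hi⟩ = true then
        ((-1 : ℂ) ^ signCount a b g i) * ψ (Function.update g ⟨i, hi⟩ false)
      else 0
    else 0
  map_add' ψ φ := by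
    ext g
    simp only [PiLp.add_apply, PiLp.toLp_apply]
    split_ifs <;> simp [mul_add]
  map_smul' c ψ := by
    ext g
    simp only [PiLp.smul_apply, PiLp.toLp_apply, smul_eq_mul, RingHom.id_apply]
    split_ifs <;> ring

/-- `q_{2i} = c_{2i+1} c*_{2i} c_{2i−1}`. -/
noncomputable def qOp (a b i : ℤ) : Module.End ℂ (Hs a b) :=
  cAnn a b (2 * i + 1) * cCr a b (2 * i) * cAnn a b (2 * i - 1)

/-- The Nicolai supercharge `Q[k,l] = Σ_{i=k}^{l} q_{2i}`. -/
noncomputable def QNic (a b k l : ℤ) : Module.End ℂ (Hs a b) :=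
  ∑ i ∈ Finset.Icc k l, qOp a b i

/-- Membership in `Ξ̂_{k,l}`: a `{−1,+1}`-valued function on `{2k, …, 2l}` with no
forbidden sign triplet at interior even sites, constant on each two-site edge. -/
def memXi (k l : ℤ) (f : ℤ → ℤ) : Prop :=
  (∀ i ∈ Finset.Icc (2 * k) (2 * l), f i = 1 ∨ f i = -1) ∧
  (∀ i : ℤ, k < i → i < l →
    ¬(f (2 * i - 1) = -1 ∧ f (2 * i) = 1 ∧ f (2 * i + 1) = -1) ∧
    ¬(f (2 * i - 1) = 1 ∧ f (2 * i) = -1 ∧ f (2 * i + 1) = 1)) ∧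
  f (2 * k) = f (2 * k + 1) ∧ f (2 * l - 1) = f (2 * l)

/-- `ζ_i(+1) = c*_i`, `ζ_i(−1) = c_i`. -/
noncomputable def zeta (a b i : ℤ) (v : ℤ) : Module.End ℂ (Hs a b) :=
  if v = 1 then cCr a b i else if v = -1 then cAnn a b i else 0

/-- The local fermion operator `Q(f) = ζ_{2k}(f(2k)) ζ_{2k+1}(f(2k+1)) ⋯ ζ_{2l}(f(2l))`,
the product taken in increasing site order. -/
noncomputable def QF (a b k l : ℤ) (f : ℤ → ℤ) : Module.End ℂ (Hs a b) :=
  ((List.range (2 * l - 2 * k + 1).toNat).map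
    (fun j => zeta a b (2 * k + (j : ℤ)) (f (2 * k + (j : ℤ))))).prod

/-- `g` has a forbidden triplet at the even site `2i`. -/
def forbiddenAt (g : ℤ → Bool) (i : ℤ) : Prop :=
  (g (2 * i - 1) = false ∧ g (2 * i) = true ∧ g (2 * i + 1) = false) ∨
  (g (2 * i - 1) = true ∧ g (2 * i) = false ∧ g (2 * i + 1) = true)

/-- Membership in `Υ̂_{k,l}`: no forbidden triplet at interior even sites and the
open SUSY boundary condition (only the values on `{2k, …, 2l}` are relevant). -/
def memUps (k l : ℤ) (g : ℤ → Bool) : Prop :=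
  (∀ i : ℤ, k < i → i < l → ¬ forbiddenAt g i) ∧
  g (2 * k) = g (2 * k + 1) ∧ g (2 * l - 1) = g (2 * l)

/-- Extend a configuration on `S` to all of `ℤ` by `false`. -/
noncomputable def ext (a b : ℤ) (g : Config a b) : ℤ → Bool :=
  fun i => if h : i ∈ Finset.Icc a b then g ⟨i, h⟩ else false

/-- The charge `f ∈ Ξ̂_{k,l}` is applicable to the configuration `g`. -/
def applicable (k l : ℤ) (f : ℤ → ℤ) (g : ℤ → Bool) : Prop :=
  ∀ i : ℤ, 2 * k ≤ i → i ≤ 2 * l → (f i = 1 → g i = false) ∧ (f i = -1 → g i = true)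

/-- The configuration `f·g` resulting from the action of the charge `f ∈ Ξ̂_{k,l}` on `g`. -/
def applyCharge (k l : ℤ) (f : ℤ → ℤ) (g : ℤ → Bool) : ℤ → Bool :=
  fun i => if 2 * k ≤ i ∧ i ≤ 2 * l then decide (f i = 1) else g i

/-- `Reachable p q g₀ g`: `g` is obtained from `g₀` by finitely many applications of
applicable charges from `Ξ̂(p,q) = ⋃_{p ≤ k < l ≤ q} Ξ̂_{k,l}`. -/
inductive Reachable (p q : ℤ) : (ℤ → Bool) → (ℤ → Bool) → Prop
  | refl (g : ℤ → Bool) : Reachable p q g g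
  | step {g₀ g : ℤ → Bool} (k l : ℤ) (f : ℤ → ℤ) :
      Reachable p q g₀ g → p ≤ k → k < l → l ≤ q → memXi k l f → applicable k l f g →
      Reachable p q g₀ (applyCharge k l f g)

/-- The fermion parity operator `P e_g = (−1)^{#occupied sites} e_g`. -/
noncomputable def parity (a b : ℤ) : Module.End ℂ (Hs a b) where
  toFun ψ := WithLp.toLp 2 fun g =>
    ((-1 : ℂ) ^ (Finset.univ.filter fun j : {x : ℤ // x ∈ Finset.Icc a b} => g j = true).card)
      * ψ g
  map_add' ψ φ := by
    ext g
    simp only [PiLp.add_apply, PiLp.toLp_apply]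
    ring
  map_smul' c ψ := by
    ext g
    simp only [PiLp.smul_apply, PiLp.toLp_apply, smul_eq_mul, RingHom.id_apply]
    ring

/-! ### auxiliary development -/

/-- unified creation/annihilation operator: `op a b i true = cCr`, `op a b i false = cAnn`. -/
noncomputable def op (a b i : ℤ) (t : Bool) : Module.End ℂ (Hs a b) :=
  if t then cCr a b i else cAnn a b i

lemma op_apply (a b i : ℤ) (t : Bool) (ψ : Hs a b) (g : Config a b) :
    op a b i t ψ g = if hi : i ∈ Finset.Icc a b then
      if g ⟨i, hi⟩ = t then
        ((-1 : ℂ) ^ signCount a b g i) * ψ (Function.update g ⟨i, hi⟩ (!t))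
      else 0
    else 0 := by
  cases t <;> rfl

lemma signCount_update_of_not_lt (a b : ℤ) (g : Config a b) {i j : ℤ} (hj : j ∈ Finset.Icc a b)
    (h : ¬ j < i) (v : Bool) :
    signCount a b (Function.update g ⟨j, hj⟩ v) i = signCount a b g i := by
  unfold signCount
  congr 1
  apply Finset.filter_congr
  intro x _
  by_cases hx : x = ⟨j, hj⟩
  · subst hx; simp [Function.update_self, h]
  · simp [Function.update_of_ne hx]

lemma signCount_update_lt (a b : ℤ) (g : Config a b) {i j : ℤ} (hj : j ∈ Finset.Icc a b)
    (h : j < i) :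
    signCount a b (Function.update g ⟨j, hj⟩ true) i
      = signCount a b (Function.update g ⟨j, hj⟩ false) i + 1 := by
  unfold signCount
  have hins : (Finset.univ.filter fun x : {x : ℤ // x ∈ Finset.Icc a b} =>
        x.1 < i ∧ (Function.update g ⟨j, hj⟩ true) x = true)
      = insert ⟨j, hj⟩ (Finset.univ.filter fun x : {x : ℤ // x ∈ Finset.Icc a b} =>
        x.1 < i ∧ (Function.update g ⟨j, hj⟩ false) x = true) := by
    ext x
    by_cases hx : x = ⟨j, hj⟩
    · subst hx; simp [Function.update_self, h]
    · simp [Function.update_of_ne hx, hx]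
  have hnot : (⟨j, hj⟩ : {x : ℤ // x ∈ Finset.Icc a b}) ∉
      (Finset.univ.filter fun x : {x : ℤ // x ∈ Finset.Icc a b} =>
        x.1 < i ∧ (Function.update g ⟨j, hj⟩ false) x = true) := by
    simp [Function.update_self]
  rw [hins, Finset.card_insert_of_notMem hnot]

/-- the key sign flip: updating a site `j < i` to the opposite of its current value flips the
Jordan–Wigner sign at `i`. -/
lemma neg_one_pow_signCount_update (a b : ℤ) (g : Config a b) {i j : ℤ}
    (hj : j ∈ Finset.Icc a b) (h : j < i) :
    ((-1 : ℂ) ^ signCount a b (Function.update g ⟨j, hj⟩ (!(g ⟨j, hj⟩))) i)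
      = -((-1 : ℂ) ^ signCount a b g i) := by
  have key := signCount_update_lt a b g hj h
  cases hv : g ⟨j, hj⟩ with
  | false =>
      have hg : Function.update g ⟨j, hj⟩ false = g := by
        rw [← hv]; exact Function.update_eq_self _ g
      simp only [Bool.not_false]
      rw [key, hg, pow_succ]
      ring
  | true =>
      have hg : Function.update g ⟨j, hj⟩ true = g := by
        rw [← hv]; exact Function.update_eq_self _ g
      simp only [Bool.not_true]
      rw [hg] at key
      rw [key, pow_succ]
      ring

lemma op_outside (a b i : ℤ) (t : Bool) (hi : i ∉ Finset.Icc a b) : op a b i t = 0 := by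
  ext ψ g
  rw [op_apply, dif_neg hi]
  rfl

lemma op_apply_mem (a b i : ℤ) (t : Bool) (hi : i ∈ Finset.Icc a b) (ψ : Hs a b)
    (g : Config a b) :
    op a b i t ψ g = if g ⟨i, hi⟩ = t then
        ((-1 : ℂ) ^ signCount a b g i) * ψ (Function.update g ⟨i, hi⟩ (!t))
      else 0 := by
  rw [op_apply]; exact dif_pos hi

lemma op_mul_op_same (a b i : ℤ) (t : Bool) : op a b i t * op a b i t = 0 := by
  by_cases hi : i ∈ Finset.Icc a b
  · ext ψ g
    rw [Module.End.mul_apply, op_apply_mem a b i t hi]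
    by_cases hg : g ⟨i, hi⟩ = t
    · rw [if_pos hg, op_apply_mem a b i t hi,
        if_neg (by simp [Function.update_self])]
      simp
    · rw [if_neg hg]; rfl
  · rw [op_outside a b i t hi]; simp

lemma op_anticomm_lt (a b : ℤ) {i j : ℤ} (hij : i < j) (t s : Bool) :
    op a b i t * op a b j s = -(op a b j s * op a b i t) := by
  by_cases hi : i ∈ Finset.Icc a b
  swap
  · rw [op_outside a b i t hi]; simp
  by_cases hj : j ∈ Finset.Icc a b
  swap
  · rw [op_outside a b j s hj]; simp
  have hne : (⟨i, hi⟩ : {x : ℤ // x ∈ Finset.Icc a b}) ≠ ⟨j, hj⟩ := by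
    simp only [ne_eq, Subtype.mk.injEq]; omega
  ext ψ g
  simp only [Module.End.mul_apply, LinearMap.neg_apply, PiLp.neg_apply,
    op_apply_mem a b i t hi, op_apply_mem a b j s hj,
    Function.update_of_ne hne, Function.update_of_ne hne.symm]
  by_cases hgi : g ⟨i, hi⟩ = t
  swap
  · simp [hgi]
  by_cases hgj : g ⟨j, hj⟩ = s
  swap
  · simp [hgj]
  simp only [if_pos hgi, if_pos hgj]
  rw [Function.update_comm hne.symm,
    signCount_update_of_not_lt a b g hj (by omega) (!s)]
  have hsign : ((-1 : ℂ) ^ signCount a b (Function.update g ⟨i, hi⟩ (!t)) j)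
      = -((-1 : ℂ) ^ signCount a b g j) := by
    rw [← hgi]
    exact neg_one_pow_signCount_update a b g hi hij
  rw [hsign]
  ring

lemma op_anticomm (a b : ℤ) {i j : ℤ} (hij : i ≠ j) (t s : Bool) :
    op a b i t * op a b j s = -(op a b j s * op a b i t) := by
  rcases lt_or_gt_of_ne hij with h | h
  · exact op_anticomm_lt a b h t s
  · rw [op_anticomm_lt a b h s t, neg_neg]

lemma adjoint_op (a b i : ℤ) (t : Bool) :
    LinearMap.adjoint (op a b i t) = op a b i (!t) := by
  symm
  rw [LinearMap.eq_adjoint_iff]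
  intro x y
  by_cases hi : i ∈ Finset.Icc a b
  swap
  · rw [op_outside a b i (!t) hi, op_outside a b i t hi]
    simp
  have hEquiv : Function.Involutive
      (fun g : Config a b => Function.update g ⟨i, hi⟩ (!(g ⟨i, hi⟩))) := by
    intro g
    funext x
    by_cases hx : x = ⟨i, hi⟩
    · subst hx; simp
    · simp [Function.update_of_ne hx]
  simp only [PiLp.inner_apply, RCLike.inner_apply]
  rw [← Equiv.sum_comp (Function.Involutive.toPerm _ hEquiv)
      (fun g => y g * (starRingEnd ℂ) (op a b i (!t) x g))]
  apply Finset.sum_congr rfl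
  intro g _
  simp only [Function.Involutive.coe_toPerm]
  rw [op_apply_mem a b i (!t) hi, op_apply_mem a b i t hi]
  by_cases hg : g ⟨i, hi⟩ = t
  · rw [if_pos (by simp [hg]), if_pos hg]
    have h1 : Function.update g ⟨i, hi⟩ (!g ⟨i, hi⟩) ⟨i, hi⟩ = !t := by simp [hg]
    have h2 : signCount a b (Function.update g ⟨i, hi⟩ (!g ⟨i, hi⟩)) i
        = signCount a b g i := signCount_update_of_not_lt a b g hi (by omega) _
    have h3 : Function.update (Function.update g ⟨i, hi⟩ (!g ⟨i, hi⟩)) ⟨i, hi⟩ (!!t) = g := by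
      funext x
      by_cases hx : x = ⟨i, hi⟩
      · subst hx; simp [hg]
      · simp [Function.update_of_ne hx]
    rw [h2, h3]
    have h4 : Function.update g ⟨i, hi⟩ (!g ⟨i, hi⟩) = Function.update g ⟨i, hi⟩ (!t) := by
      rw [hg]
    rw [h4]
    rw [map_mul, map_pow]
    simp only [map_neg, map_one]
    ring
  · have hcond : ¬ (Function.update g ⟨i, hi⟩ (!(g ⟨i, hi⟩)) ⟨i, hi⟩ = !t) := by
      simp only [Function.update_self]
      intro hh
      exact hg (Bool.not_inj hh)
    rw [if_neg hcond, if_neg hg]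
    simp

/-! ### list lemmas -/

lemma anticomm_prod {a b : ℤ} (X : Module.End ℂ (Hs a b)) :
    ∀ (L : List (Module.End ℂ (Hs a b))), (∀ Y ∈ L, X * Y = -(Y * X)) →
      X * L.prod = (-1 : ℂ) ^ L.length • (L.prod * X)
  | [], _ => by simp
  | Y :: L, h => by
    have hY := h Y List.mem_cons_self
    have hL := anticomm_prod X L (fun Z hZ => h Z (List.mem_cons_of_mem _ hZ))
    simp only [List.prod_cons, List.length_cons]
    rw [← mul_assoc, hY, neg_mul, mul_assoc, hL]
    rw [mul_smul_comm]
    rw [pow_succ]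
    rw [← mul_assoc]
    rw [mul_comm ((-1 : ℂ) ^ L.length) (-1 : ℂ)]
    rw [mul_smul]
    simp [mul_assoc]

lemma kill_lemma {a b : ℤ} (X : Module.End ℂ (Hs a b)) (L : List (Module.End ℂ (Hs a b)))
    (hXX : X * X = 0) (h : ∀ Y ∈ L, X * Y = -(Y * X)) :
    X * L.prod * X = 0 := by
  rw [anticomm_prod X L h, smul_mul_assoc, mul_assoc, hXX]
  simp

lemma prod_dup_zero {a b : ℤ} (X : Module.End ℂ (Hs a b))
    (L M R : List (Module.End ℂ (Hs a b)))
    (hXX : X * X = 0) (hM : ∀ Y ∈ M, X * Y = -(Y * X)) :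
    (L ++ X :: (M ++ X :: R)).prod = 0 := by
  rw [List.prod_append, List.prod_cons, List.prod_append, List.prod_cons]
  have : X * (M.prod * (X * R.prod)) = (X * M.prod * X) * R.prod := by
    simp [mul_assoc]
  rw [this, kill_lemma X M hXX hM]
  simp

lemma zeta_eq_op (a b s : ℤ) (f : ℤ → ℤ) (h : f s = 1 ∨ f s = -1) :
    zeta a b s (f s) = op a b s (decide (f s = 1)) := by
  rcases h with h | h <;> simp [zeta, op, h]

lemma flip3 {a b : ℤ} (X Y Z P : Module.End ℂ (Hs a b))
    (hX : X * P = -(P * X)) (hY : Y * P = -(P * Y)) (hZ : Z * P = -(P * Z)) :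
    (X * Y * Z) * P = -(P * (X * Y * Z)) := by
  have hlist : ∀ W ∈ [X, Y, Z], P * W = -(W * P) := by
    intro W hW
    simp only [List.mem_cons, List.mem_singleton, List.not_mem_nil, or_false] at hW
    rcases hW with h | h | h
    · subst h; rw [hX, neg_neg]
    · subst h; rw [hY, neg_neg]
    · subst h; rw [hZ, neg_neg]
  have h := anticomm_prod P [X, Y, Z] hlist
  simp only [List.prod_cons, List.prod_nil, mul_one, List.length_cons, List.length_nil] at h
  rw [show (0 + 1 + 1 + 1 : ℕ) = 3 from rfl] at h
  rw [show ((-1 : ℂ)) ^ (3 : ℕ) = -1 by norm_num, neg_smul, one_smul] at h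
  rw [mul_assoc X Y Z, h, neg_neg]

lemma QF_eq (a b k l : ℤ) (f : ℤ → ℤ) :
    QF a b k l f = ((List.range (2 * l - 2 * k + 1).toNat).map
      (fun j : ℕ => zeta a b (2 * k + (j : ℤ)) (f (2 * k + (j : ℤ))))).prod := by
  rw [QF]
  congr 1
  simp only [List.pure_def, List.bind_eq_flatMap, ← List.map_eq_flatMap, List.map_map]
  rfl

lemma QF_mem (a b k l : ℤ) (f : ℤ → ℤ)
    (hf1 : ∀ s ∈ Finset.Icc (2 * k) (2 * l), f s = 1 ∨ f s = -1) (hkl : k ≤ l) :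
    ∀ Y ∈ (List.range (2 * l - 2 * k + 1).toNat).map
      (fun j : ℕ => zeta a b (2 * k + (j : ℤ)) (f (2 * k + (j : ℤ)))),
      ∃ u : ℤ, 2 * k ≤ u ∧ u ≤ 2 * l ∧ Y = op a b u (decide (f u = 1)) := by
  intro Y hY
  rcases List.mem_map.1 hY with ⟨j, hj, rfl⟩
  rw [List.mem_range] at hj
  refine ⟨2 * k + (j : ℤ), by omega, by omega, ?_⟩
  rw [zeta_eq_op]
  exact hf1 _ (Finset.mem_Icc.2 ⟨by omega, by omega⟩)

lemma QF_split (a b k l : ℤ) (f : ℤ → ℤ)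
    (hf1 : ∀ u ∈ Finset.Icc (2 * k) (2 * l), f u = 1 ∨ f u = -1)
    (s : ℤ) (h1 : 2 * k ≤ s) (h2 : s ≤ 2 * l) :
    ∃ L1 L2 : List (Module.End ℂ (Hs a b)),
      QF a b k l f = (L1 ++ op a b s (decide (f s = 1)) :: L2).prod ∧
      (∀ Y ∈ L1, ∃ u : ℤ, 2 * k ≤ u ∧ u < s ∧ Y = op a b u (decide (f u = 1))) ∧
      (∀ Y ∈ L2, ∃ u : ℤ, s < u ∧ u ≤ 2 * l ∧ Y = op a b u (decide (f u = 1))) := by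
  set m := (s - 2 * k).toNat with hm
  set r := (2 * l - s).toNat with hr
  have hN : (2 * l - 2 * k + 1).toNat = m + 1 + r := by omega
  refine ⟨(List.range m).map (fun j : ℕ => zeta a b (2 * k + (j : ℤ)) (f (2 * k + (j : ℤ)))),
    (List.range r).map (fun j : ℕ => zeta a b (s + 1 + (j : ℤ)) (f (s + 1 + (j : ℤ)))),
    ?_, ?_, ?_⟩
  · have hlist : List.range (m + 1 + r)
        = List.range m ++ m :: (List.range r).map (fun x => m + 1 + x) := by
      rw [List.range_add, List.range_succ]
      simp [List.append_assoc]
    rw [QF_eq, hN, hlist, List.map_append, List.map_cons, List.map_map]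
    have hmid : zeta a b (2 * k + (m : ℤ)) (f (2 * k + (m : ℤ)))
        = op a b s (decide (f s = 1)) := by
      have e : 2 * k + (m : ℤ) = s := by omega
      rw [e, zeta_eq_op a b s f (hf1 s (Finset.mem_Icc.2 ⟨h1, h2⟩))]
    have hfun : ((fun j : ℕ => zeta a b (2 * k + (j : ℤ)) (f (2 * k + (j : ℤ))))
          ∘ (fun x : ℕ => m + 1 + x))
        = fun j : ℕ => zeta a b (s + 1 + (j : ℤ)) (f (s + 1 + (j : ℤ))) := by
      funext j
      have e : 2 * k + ((m + 1 + j : ℕ) : ℤ) = s + 1 + (j : ℤ) := by push_cast; omega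
      simp only [Function.comp_apply, e]
    rw [hmid, hfun]
  · intro Y hY
    rcases List.mem_map.1 hY with ⟨j, hj, rfl⟩
    rw [List.mem_range] at hj
    refine ⟨2 * k + (j : ℤ), by omega, by omega, ?_⟩
    rw [zeta_eq_op]
    exact hf1 _ (Finset.mem_Icc.2 ⟨by omega, by omega⟩)
  · intro Y hY
    rcases List.mem_map.1 hY with ⟨j, hj, rfl⟩
    rw [List.mem_range] at hj
    refine ⟨s + 1 + (j : ℤ), by omega, by omega, ?_⟩
    rw [zeta_eq_op]
    exact hf1 _ (Finset.mem_Icc.2 ⟨by omega, by omega⟩)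

/-- generalized supercharge summand: `qGen i false = q_{2i}`, `-(qGen i true) = q_{2i}†`. -/
noncomputable def qGen (a b i : ℤ) (u : Bool) : Module.End ℂ (Hs a b) :=
  op a b (2 * i + 1) u * op a b (2 * i) (!u) * op a b (2 * i - 1) u

lemma qOp_eq (a b i : ℤ) : qOp a b i = qGen a b i false := by
  simp [qOp, qGen, op]

lemma star_op (a b i : ℤ) (t : Bool) : star (op a b i t) = op a b i (!t) := by
  rw [LinearMap.star_eq_adjoint, adjoint_op]

lemma star_qGen (a b i : ℤ) (u : Bool) :
    star (qGen a b i u) = -(qGen a b i (!u)) := by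
  rw [qGen, star_mul, star_mul, star_op, star_op, star_op, Bool.not_not]
  have h1 : op a b (2 * i) u * op a b (2 * i + 1) (!u)
      = -(op a b (2 * i + 1) (!u) * op a b (2 * i) u) :=
    op_anticomm a b (by omega) _ _
  have h2 : op a b (2 * i - 1) (!u) * op a b (2 * i + 1) (!u)
      = -(op a b (2 * i + 1) (!u) * op a b (2 * i - 1) (!u)) :=
    op_anticomm a b (by omega) _ _
  have h3 : op a b (2 * i - 1) (!u) * op a b (2 * i) u
      = -(op a b (2 * i) u * op a b (2 * i - 1) (!u)) :=
    op_anticomm a b (by omega) _ _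
  rw [qGen, Bool.not_not]
  calc op a b (2 * i - 1) (!u) * (op a b (2 * i) u * op a b (2 * i + 1) (!u))
      = op a b (2 * i - 1) (!u) * -(op a b (2 * i + 1) (!u) * op a b (2 * i) u) := by rw [h1]
    _ = -((op a b (2 * i - 1) (!u) * op a b (2 * i + 1) (!u)) * op a b (2 * i) u) := by
        rw [mul_neg, mul_assoc]
    _ = -(-(op a b (2 * i + 1) (!u) * op a b (2 * i - 1) (!u)) * op a b (2 * i) u) := by rw [h2]
    _ = op a b (2 * i + 1) (!u) * (op a b (2 * i - 1) (!u) * op a b (2 * i) u) := by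
        rw [neg_mul, neg_neg, mul_assoc]
    _ = op a b (2 * i + 1) (!u) * -(op a b (2 * i) u * op a b (2 * i - 1) (!u)) := by rw [h3]
    _ = -(op a b (2 * i + 1) (!u) * op a b (2 * i) u * op a b (2 * i - 1) (!u)) := by
        rw [mul_neg, mul_assoc]

/-- a single fermion operator at a site outside `{2k, …, 2l}` anticommutes with `Q(f)`. -/
lemma op_flip_QF (a b k l : ℤ) (f : ℤ → ℤ) (hkl : k < l)
    (hf1 : ∀ u ∈ Finset.Icc (2 * k) (2 * l), f u = 1 ∨ f u = -1)
    (m : ℤ) (hm : m < 2 * k ∨ 2 * l < m) (t : Bool) :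
    op a b m t * QF a b k l f = -(QF a b k l f * op a b m t) := by
  rw [QF_eq]
  set L := (List.range (2 * l - 2 * k + 1).toNat).map
      (fun j : ℕ => zeta a b (2 * k + (j : ℤ)) (f (2 * k + (j : ℤ)))) with hL
  have hmem := QF_mem a b k l f hf1 (by omega)
  have hanti : ∀ Y ∈ L, op a b m t * Y = -(Y * op a b m t) := by
    intro Y hY
    rcases hmem Y hY with ⟨u, hu1, hu2, rfl⟩
    exact op_anticomm a b (by omega) _ _
  have h := anticomm_prod (op a b m t) L hanti
  have hlen : L.length = (2 * l - 2 * k + 1).toNat := by simp [hL]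
  have hodd : Odd L.length := by
    rw [hlen, Nat.odd_iff]; omega
  rw [hodd.neg_one_pow, neg_smul, one_smul] at h
  exact h

lemma kill_abstract {a b : ℤ} (X : Module.End ℂ (Hs a b))
    (P1 P2 L1 L2 : List (Module.End ℂ (Hs a b)))
    (hXX : X * X = 0)
    (hP1 : ∀ Y ∈ P1, X * Y = -(Y * X)) (hP2 : ∀ Y ∈ P2, X * Y = -(Y * X))
    (hL1 : ∀ Y ∈ L1, X * Y = -(Y * X)) (hL2 : ∀ Y ∈ L2, X * Y = -(Y * X)) :
    (P1 ++ X :: P2).prod * (L1 ++ X :: L2).prod = 0 ∧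
    (L1 ++ X :: L2).prod * (P1 ++ X :: P2).prod = 0 := by
  constructor
  · have e : (P1 ++ X :: P2) ++ (L1 ++ X :: L2) = P1 ++ X :: ((P2 ++ L1) ++ X :: L2) := by
      simp
    rw [← List.prod_append, e]
    exact prod_dup_zero X P1 (P2 ++ L1) L2 hXX (by
      intro Y hY
      rcases List.mem_append.1 hY with h | h
      · exact hP2 Y h
      · exact hL1 Y h)
  · have e : (L1 ++ X :: L2) ++ (P1 ++ X :: P2) = L1 ++ X :: ((L2 ++ P1) ++ X :: P2) := by
      simp
    rw [← List.prod_append, e]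
    exact prod_dup_zero X L1 (L2 ++ P1) P2 hXX (by
      intro Y hY
      rcases List.mem_append.1 hY with h | h
      · exact hL2 Y h
      · exact hP1 Y h)

lemma qGen_anticomm_QF (a b k l : ℤ) (f : ℤ → ℤ) (hkl : k < l) (hf : memXi k l f)
    (i : ℤ) (u : Bool) :
    qGen a b i u * QF a b k l f = -(QF a b k l f * qGen a b i u) := by
  obtain ⟨hf1, hf2, hf3, hf4⟩ := hf
  by_cases hi : k ≤ i ∧ i ≤ l
  swap
  · -- disjoint case
    have hm1 : (2 * i + 1 < 2 * k ∨ 2 * l < 2 * i + 1) := by omega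
    have hm2 : (2 * i < 2 * k ∨ 2 * l < 2 * i) := by omega
    have hm3 : (2 * i - 1 < 2 * k ∨ 2 * l < 2 * i - 1) := by omega
    exact flip3 _ _ _ _ (op_flip_QF a b k l f hkl hf1 _ hm1 u)
      (op_flip_QF a b k l f hkl hf1 _ hm2 (!u))
      (op_flip_QF a b k l f hkl hf1 _ hm3 u)
  obtain ⟨hki, hil⟩ := hi
  -- find a duplicated (site, type) pair
  have hdup : (2 * k ≤ 2 * i - 1 ∧ decide (f (2 * i - 1) = 1) = u)
      ∨ (decide (f (2 * i) = 1) = !u)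
      ∨ (2 * i + 1 ≤ 2 * l ∧ decide (f (2 * i + 1) = 1) = u) := by
    by_cases hB : decide (f (2 * i) = 1) = !u
    · exact Or.inr (Or.inl hB)
    have hBu : decide (f (2 * i) = 1) = u := by
      revert hB; cases u <;> cases hd : decide (f (2 * i) = 1) <;> simp
    by_cases hik : i = k
    · subst hik
      refine Or.inr (Or.inr ⟨by omega, ?_⟩)
      rw [← hf3]; exact hBu
    by_cases hil' : i = l
    · subst hil'
      refine Or.inl ⟨by omega, ?_⟩
      rw [hf4]; exact hBu
    · -- interior
      by_cases hA : decide (f (2 * i + 1) = 1) = u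
      · exact Or.inr (Or.inr ⟨by omega, hA⟩)
      by_cases hC : decide (f (2 * i - 1) = 1) = u
      · exact Or.inl ⟨by omega, hC⟩
      exfalso
      have hk' : k < i := by omega
      have hl' : i < l := by omega
      have hv1 : f (2 * i - 1) = 1 ∨ f (2 * i - 1) = -1 :=
        hf1 _ (Finset.mem_Icc.2 ⟨by omega, by omega⟩)
      have hv2 : f (2 * i) = 1 ∨ f (2 * i) = -1 :=
        hf1 _ (Finset.mem_Icc.2 ⟨by omega, by omega⟩)
      have hv3 : f (2 * i + 1) = 1 ∨ f (2 * i + 1) = -1 :=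
        hf1 _ (Finset.mem_Icc.2 ⟨by omega, by omega⟩)
      have hAu : decide (f (2 * i + 1) = 1) = !u := by
        revert hA; cases u <;> cases hd : decide (f (2 * i + 1) = 1) <;> simp
      have hCu : decide (f (2 * i - 1) = 1) = !u := by
        revert hC; cases u <;> cases hd : decide (f (2 * i - 1) = 1) <;> simp
      cases u with
      | true =>
          have e1 : f (2 * i - 1) = -1 := by
            rcases hv1 with h | h
            · simp [h] at hCu
            · exact h
          have e2 : f (2 * i) = 1 := by simpa using hBu
          have e3 : f (2 * i + 1) = -1 := by
            rcases hv3 with h | h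
            · simp [h] at hAu
            · exact h
          exact (hf2 i hk' hl').1 ⟨e1, e2, e3⟩
      | false =>
          have e1 : f (2 * i - 1) = 1 := by simpa using hCu
          have e2 : f (2 * i) = -1 := by
            rcases hv2 with h | h
            · simp [h] at hBu
            · exact h
          have e3 : f (2 * i + 1) = 1 := by simpa using hAu
          exact (hf2 i hk' hl').2 ⟨e1, e2, e3⟩
  -- both products vanish
  have hz : qGen a b i u * QF a b k l f = 0 ∧ QF a b k l f * qGen a b i u = 0 := by
    rcases hdup with ⟨hs1, hdup⟩ | hdup | ⟨hs3, hdup⟩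
    · -- duplicate at site 2i-1 with type u
      obtain ⟨L1, L2, hQF, hL1, hL2⟩ := QF_split a b k l f hf1 (2 * i - 1) hs1 (by omega)
      rw [hdup] at hQF
      have hq : qGen a b i u
          = ([op a b (2 * i + 1) u, op a b (2 * i) (!u)]
              ++ op a b (2 * i - 1) u :: []).prod := by
        simp [qGen, mul_assoc]
      have hkill := kill_abstract (op a b (2 * i - 1) u)
        [op a b (2 * i + 1) u, op a b (2 * i) (!u)] [] L1 L2
        (op_mul_op_same a b _ u)
        (by
          intro Y hY
          simp only [List.mem_cons, List.mem_singleton, List.not_mem_nil, or_false] at hY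
          rcases hY with rfl | rfl
          · exact op_anticomm a b (by omega) _ _
          · exact op_anticomm a b (by omega) _ _)
        (by intro Y hY; exact absurd hY List.not_mem_nil)
        (by
          intro Y hY
          rcases hL1 Y hY with ⟨v, hv1, hv2, rfl⟩
          exact op_anticomm a b (by omega) _ _)
        (by
          intro Y hY
          rcases hL2 Y hY with ⟨v, hv1, hv2, rfl⟩
          exact op_anticomm a b (by omega) _ _)
      rw [hq, hQF]
      exact hkill
    · -- duplicate at site 2i with type !u
      obtain ⟨L1, L2, hQF, hL1, hL2⟩ := QF_split a b k l f hf1 (2 * i) (by omega) (by omega)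
      rw [hdup] at hQF
      have hq : qGen a b i u
          = ([op a b (2 * i + 1) u]
              ++ op a b (2 * i) (!u) :: [op a b (2 * i - 1) u]).prod := by
        simp [qGen, mul_assoc]
      have hkill := kill_abstract (op a b (2 * i) (!u))
        [op a b (2 * i + 1) u] [op a b (2 * i - 1) u] L1 L2
        (op_mul_op_same a b _ (!u))
        (by
          intro Y hY
          simp only [List.mem_singleton] at hY
          subst hY
          exact op_anticomm a b (by omega) _ _)
        (by
          intro Y hY
          simp only [List.mem_singleton] at hY
          subst hY
          exact op_anticomm a b (by omega) _ _)
        (by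
          intro Y hY
          rcases hL1 Y hY with ⟨v, hv1, hv2, rfl⟩
          exact op_anticomm a b (by omega) _ _)
        (by
          intro Y hY
          rcases hL2 Y hY with ⟨v, hv1, hv2, rfl⟩
          exact op_anticomm a b (by omega) _ _)
      rw [hq, hQF]
      exact hkill
    · -- duplicate at site 2i+1 with type u
      obtain ⟨L1, L2, hQF, hL1, hL2⟩ := QF_split a b k l f hf1 (2 * i + 1) (by omega) hs3
      rw [hdup] at hQF
      have hq : qGen a b i u
          = ([] ++ op a b (2 * i + 1) u
              :: [op a b (2 * i) (!u), op a b (2 * i - 1) u]).prod := by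
        simp [qGen, mul_assoc]
      have hkill := kill_abstract (op a b (2 * i + 1) u)
        [] [op a b (2 * i) (!u), op a b (2 * i - 1) u] L1 L2
        (op_mul_op_same a b _ u)
        (by intro Y hY; exact absurd hY List.not_mem_nil)
        (by
          intro Y hY
          simp only [List.mem_cons, List.mem_singleton, List.not_mem_nil, or_false] at hY
          rcases hY with rfl | rfl
          · exact op_anticomm a b (by omega) _ _
          · exact op_anticomm a b (by omega) _ _)
        (by
          intro Y hY
          rcases hL1 Y hY with ⟨v, hv1, hv2, rfl⟩
          exact op_anticomm a b (by omega) _ _)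
        (by
          intro Y hY
          rcases hL2 Y hY with ⟨v, hv1, hv2, rfl⟩
          exact op_anticomm a b (by omega) _ _)
      rw [hq, hQF]
      exact hkill
  rw [hz.1, hz.2, neg_zero]

lemma comm_H {a b : ℤ} (Q A : Module.End ℂ (Hs a b))
    (h1 : Q * A = -(A * Q)) (h2 : star Q * A = -(A * star Q)) :
    (Q * star Q + star Q * Q) * A = A * (Q * star Q + star Q * Q) := by
  have e1 : (Q * star Q) * A = A * (Q * star Q) := by
    rw [mul_assoc, h2, mul_neg, ← mul_assoc, h1, neg_mul, neg_neg, mul_assoc]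
  have e2 : (star Q * Q) * A = A * (star Q * Q) := by
    rw [mul_assoc, h1, mul_neg, ← mul_assoc, h2, neg_mul, neg_neg, mul_assoc]
  rw [add_mul, mul_add, e1, e2]


/-- the Nicolai Hamiltonian `H = Q Q* + Q* Q` commutes with every hidden
local fermion operator `Q(f)`, `f ∈ Ξ̂_{k,l}`, and with its adjoint. -/
theorem nicolai_hidden_local_fermion_symmetries (a b p q : ℤ) (hpq : p ≤ q)
    (hS : Finset.Icc (2 * p - 1) (2 * q + 1) ⊆ Finset.Icc a b)
    (k l : ℤ) (hpk : p ≤ k) (hkl : k < l) (hlq : l ≤ q)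
    (f : ℤ → ℤ) (hf : memXi k l f) :
    (QNic a b p q * LinearMap.adjoint (QNic a b p q)
        + LinearMap.adjoint (QNic a b p q) * QNic a b p q) * QF a b k l f
      = QF a b k l f *
        (QNic a b p q * LinearMap.adjoint (QNic a b p q)
          + LinearMap.adjoint (QNic a b p q) * QNic a b p q) ∧
    (QNic a b p q * LinearMap.adjoint (QNic a b p q)
        + LinearMap.adjoint (QNic a b p q) * QNic a b p q)
        * LinearMap.adjoint (QF a b k l f)
      = LinearMap.adjoint (QF a b k l f) *
        (QNic a b p q * LinearMap.adjoint (QNic a b p q)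
          + LinearMap.adjoint (QNic a b p q) * QNic a b p q) := by

  have hQ : QNic a b p q * QF a b k l f = -(QF a b k l f * QNic a b p q) := by
    rw [QNic, Finset.sum_mul, Finset.mul_sum, ← Finset.sum_neg_distrib]
    exact Finset.sum_congr rfl fun i _ => by
      rw [qOp_eq]; exact qGen_anticomm_QF a b k l f hkl hf i false
  have hQs : star (QNic a b p q) * QF a b k l f
      = -(QF a b k l f * star (QNic a b p q)) := by
    rw [QNic, star_sum, Finset.sum_mul, Finset.mul_sum, ← Finset.sum_neg_distrib]
    refine Finset.sum_congr rfl fun i _ => ?_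
    rw [qOp_eq, star_qGen, neg_mul, mul_neg, Bool.not_false, qGen_anticomm_QF a b k l f hkl hf i true]
  simp only [← LinearMap.star_eq_adjoint]
  refine ⟨comm_H _ _ hQ hQs, ?_⟩
  have h1' : QNic a b p q * star (QF a b k l f)
      = -(star (QF a b k l f) * QNic a b p q) := by
    have h := congrArg star hQs
    simp only [star_mul, star_neg, star_star] at h
    rw [h, neg_neg]
  have h2' : star (QNic a b p q) * star (QF a b k l f)
      = -(star (QF a b k l f) * star (QNic a b p q)) := by
    have h := congrArg star hQ
    simp only [star_mul, star_neg] at h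
    rw [h, neg_neg]
  exact comm_H _ _ h1' h2'


end Nicolai
end

section
/- Let k ≤ l be integers, let S = {2k−1, 2k, …, 2l+1}, and let Q = Q[k,l] be the Nicolai supercharge on ℋ_S. For every configuration g : S → Bool, the basis vector e_g satisfies Q e_g = 0 and Q* e_g = 0 if and only if g has no forbidden triplet at any even site 2i with k ≤ i ≤ l. (A classical state is supersymmetric for the Nicolai model exactly when its configuration contains no forbidden triplet.) -/
namespace Nicolai

lemma cAnn_apply (a b j : ℤ) (ψ : Hs a b) (h : Config a b) :
    cAnn a b j ψ h = if hj : j ∈ Finset.Icc a b then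
      (if h ⟨j, hj⟩ = false then
        ((-1 : ℂ) ^ signCount a b h j) * ψ (Function.update h ⟨j, hj⟩ true)
      else 0) else 0 := rfl

lemma cCr_apply (a b j : ℤ) (ψ : Hs a b) (h : Config a b) :
    cCr a b j ψ h = if hj : j ∈ Finset.Icc a b then
      (if h ⟨j, hj⟩ = true then
        ((-1 : ℂ) ^ signCount a b h j) * ψ (Function.update h ⟨j, hj⟩ false)
      else 0) else 0 := rfl

/-- flip configuration at the three sites of the triple at `2i`. -/
def flip3_s5 (a b i : ℤ) (h : Config a b) : Config a b :=
  fun j => if j.1 = 2*i-1 ∨ j.1 = 2*i ∨ j.1 = 2*i+1 then !(h j) else h j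

lemma flip3_flip3 (a b i : ℤ) (h : Config a b) : flip3_s5 a b i (flip3_s5 a b i h) = h := by
  funext j; unfold flip3_s5; split <;> simp

lemma flip3_apply_of_ne (a b i : ℤ) (h : Config a b) (j : {x : ℤ // x ∈ Finset.Icc a b})
    (hj : ¬(j.1 = 2*i-1 ∨ j.1 = 2*i ∨ j.1 = 2*i+1)) : flip3_s5 a b i h j = h j := by
  unfold flip3_s5; rw [if_neg hj]

lemma flip3_apply_of (a b i : ℤ) (h : Config a b) (j : {x : ℤ // x ∈ Finset.Icc a b})
    (hj : j.1 = 2*i-1 ∨ j.1 = 2*i ∨ j.1 = 2*i+1) : flip3_s5 a b i h j = !(h j) := by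
  unfold flip3_s5; rw [if_pos hj]

lemma update3_eq_flip3 (a b i : ℤ) (m1 : 2*i-1 ∈ Finset.Icc a b) (m2 : 2*i ∈ Finset.Icc a b)
    (m3 : 2*i+1 ∈ Finset.Icc a b) (h : Config a b)
    (h1 : h ⟨2*i-1, m1⟩ = false) (h2 : h ⟨2*i, m2⟩ = true) (h3 : h ⟨2*i+1, m3⟩ = false) :
    Function.update (Function.update (Function.update h ⟨2*i+1, m3⟩ true) ⟨2*i, m2⟩ false)
      ⟨2*i-1, m1⟩ true = flip3_s5 a b i h := by
  funext j
  obtain ⟨x, hx⟩ := j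
  simp only [Function.update_apply, flip3_s5, Subtype.mk.injEq]
  by_cases e1 : x = 2*i-1
  · subst e1; rw [if_pos rfl, if_pos (by omega), h1]; rfl
  · rw [if_neg e1]
    by_cases e2 : x = 2*i
    · subst e2; rw [if_pos rfl, if_pos (by omega), h2]; rfl
    · rw [if_neg e2]
      by_cases e3 : x = 2*i+1
      · subst e3; rw [if_pos rfl, if_pos (by omega), h3]; rfl
      · rw [if_neg e3, if_neg (by omega)]


section Key
variable {a b i : ℤ} (m1 : 2*i-1 ∈ Finset.Icc a b) (m2 : 2*i ∈ Finset.Icc a b)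
  (m3 : 2*i+1 ∈ Finset.Icc a b)

lemma ne23 : (⟨2*i, m2⟩ : {x : ℤ // x ∈ Finset.Icc a b}) ≠ ⟨2*i+1, m3⟩ := by
  simp only [ne_eq, Subtype.mk.injEq]; omega

lemma ne13 : (⟨2*i-1, m1⟩ : {x : ℤ // x ∈ Finset.Icc a b}) ≠ ⟨2*i+1, m3⟩ := by
  simp only [ne_eq, Subtype.mk.injEq]; omega

lemma ne12 : (⟨2*i-1, m1⟩ : {x : ℤ // x ∈ Finset.Icc a b}) ≠ ⟨2*i, m2⟩ := by
  simp only [ne_eq, Subtype.mk.injEq]; omega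

lemma qOp_expand (g h : Config a b) :
    qOp a b i (e a b g) h =
      if h ⟨2*i+1, m3⟩ = false then
        ((-1 : ℂ) ^ signCount a b h (2*i+1)) *
          (if h ⟨2*i, m2⟩ = true then
            ((-1 : ℂ) ^ signCount a b (Function.update h ⟨2*i+1, m3⟩ true) (2*i)) *
              (if h ⟨2*i-1, m1⟩ = false then
                ((-1 : ℂ) ^ signCount a b
                    (Function.update (Function.update h ⟨2*i+1, m3⟩ true) ⟨2*i, m2⟩ false)
                    (2*i-1)) *
                  (e a b g
                    (Function.update
                      (Function.update (Function.update h ⟨2*i+1, m3⟩ true) ⟨2*i, m2⟩ false)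
                      ⟨2*i-1, m1⟩ true))
              else 0)
          else 0)
      else 0 := by
  rw [qOp, Module.End.mul_apply, Module.End.mul_apply, cAnn_apply, dif_pos m3]
  by_cases c3 : h ⟨2*i+1, m3⟩ = false
  · rw [if_pos c3, if_pos c3]
    congr 1
    rw [cCr_apply, dif_pos m2, Function.update_of_ne (ne23 m2 m3)]
    by_cases c2 : h ⟨2*i, m2⟩ = true
    · rw [if_pos c2, if_pos c2]
      congr 1
      rw [cAnn_apply, dif_pos m1, Function.update_of_ne (ne12 m1 m2),
        Function.update_of_ne (ne13 m1 m3)]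
    · rw [if_neg c2, if_neg c2]
  · rw [if_neg c3, if_neg c3]

lemma qOp_apply_eq_zero (g h : Config a b)
    (hc : ¬(h ⟨2*i-1, m1⟩ = false ∧ h ⟨2*i, m2⟩ = true ∧ h ⟨2*i+1, m3⟩ = false ∧
        flip3_s5 a b i h = g)) :
    qOp a b i (e a b g) h = 0 := by
  rw [qOp_expand m1 m2 m3]
  by_cases c3 : h ⟨2*i+1, m3⟩ = false
  · rw [if_pos c3]
    by_cases c2 : h ⟨2*i, m2⟩ = true
    · rw [if_pos c2]
      by_cases c1 : h ⟨2*i-1, m1⟩ = false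
      · rw [if_pos c1, update3_eq_flip3 a b i m1 m2 m3 h c1 c2 c3]
        have hne : flip3_s5 a b i h ≠ g := fun hg => hc ⟨c1, c2, c3, hg⟩
        rw [e, EuclideanSpace.single_apply, if_neg hne]
        ring
      · rw [if_neg c1]; ring
    · rw [if_neg c2]; ring
  · rw [if_neg c3]

lemma qOp_apply_ne_zero (g h : Config a b)
    (h1 : h ⟨2*i-1, m1⟩ = false) (h2 : h ⟨2*i, m2⟩ = true) (h3 : h ⟨2*i+1, m3⟩ = false)
    (hfg : flip3_s5 a b i h = g) :
    qOp a b i (e a b g) h ≠ 0 := by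
  rw [qOp_expand m1 m2 m3, if_pos h3, if_pos h2, if_pos h1,
    update3_eq_flip3 a b i m1 m2 m3 h h1 h2 h3, e, EuclideanSpace.single_apply, if_pos hfg]
  have : ((-1 : ℂ)) ≠ 0 := by norm_num
  simp only [mul_one]
  exact mul_ne_zero (pow_ne_zero _ this) (mul_ne_zero (pow_ne_zero _ this) (pow_ne_zero _ this))

end Key


lemma mem1 {k l i : ℤ} (h1 : k ≤ i) (h2 : i ≤ l) : 2*i-1 ∈ Finset.Icc (2*k-1) (2*l+1) := by
  rw [Finset.mem_Icc]; omega
lemma mem2 {k l i : ℤ} (h1 : k ≤ i) (h2 : i ≤ l) : 2*i ∈ Finset.Icc (2*k-1) (2*l+1) := by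
  rw [Finset.mem_Icc]; omega
lemma mem3 {k l i : ℤ} (h1 : k ≤ i) (h2 : i ≤ l) : 2*i+1 ∈ Finset.Icc (2*k-1) (2*l+1) := by
  rw [Finset.mem_Icc]; omega

lemma QNic_apply (a b k l : ℤ) (ψ : Hs a b) (h : Config a b) :
    QNic a b k l ψ h = ∑ i ∈ Finset.Icc k l, qOp a b i ψ h := by
  rw [QNic, LinearMap.sum_apply, WithLp.ofLp_sum]
  exact Finset.sum_apply h _ _

lemma vec_eq_zero_iff (a b : ℤ) (v : Hs a b) : v = 0 ↔ ∀ h : Config a b, v h = 0 :=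
  ⟨fun hv h => by rw [hv]; rfl, fun hv => WithLp.ofLp_injective 2 (funext hv)⟩

lemma adjoint_e_apply (a b : ℤ) (A : Module.End ℂ (Hs a b)) (g h : Config a b) :
    LinearMap.adjoint A (e a b g) h = (starRingEnd ℂ) (A (e a b h) g) := by
  simp only [e]
  have h1 : LinearMap.adjoint A (EuclideanSpace.single g (1 : ℂ)) h
      = inner (𝕜 := ℂ) (EuclideanSpace.single h (1 : ℂ))
          (LinearMap.adjoint A (EuclideanSpace.single g (1 : ℂ))) := by
    rw [EuclideanSpace.inner_single_left]; simp
  rw [h1, LinearMap.adjoint_inner_right, EuclideanSpace.inner_single_right]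
  simp

section Main
variable {k l : ℤ}

lemma forward1 (i0 : ℤ) (hk : k ≤ i0) (hl : i0 ≤ l) (g : Config (2*k-1) (2*l+1))
    (h1 : g ⟨2*i0-1, mem1 hk hl⟩ = true) (h2 : g ⟨2*i0, mem2 hk hl⟩ = false)
    (h3 : g ⟨2*i0+1, mem3 hk hl⟩ = true) :
    QNic (2*k-1) (2*l+1) k l (e (2*k-1) (2*l+1) g) (flip3_s5 (2*k-1) (2*l+1) i0 g) ≠ 0 := by
  rw [QNic_apply]
  set h := flip3_s5 (2*k-1) (2*l+1) i0 g with hh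
  rw [Finset.sum_eq_single i0]
  · exact qOp_apply_ne_zero (mem1 hk hl) (mem2 hk hl) (mem3 hk hl) g h
      (by rw [hh, flip3_apply_of _ _ _ _ _ (by left; rfl), h1]; rfl)
      (by rw [hh, flip3_apply_of _ _ _ _ _ (by right; left; rfl), h2]; rfl)
      (by rw [hh, flip3_apply_of _ _ _ _ _ (by right; right; rfl), h3]; rfl)
      (by rw [hh, flip3_flip3])
  · intro j hj hji
    rw [Finset.mem_Icc] at hj
    refine qOp_apply_eq_zero (mem1 hj.1 hj.2) (mem2 hj.1 hj.2) (mem3 hj.1 hj.2) g h ?_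
    rintro ⟨c1, c2, c3, hfg⟩
    have hne : ¬((2*j : ℤ) = 2*i0-1 ∨ (2*j : ℤ) = 2*i0 ∨ (2*j : ℤ) = 2*i0+1) := by omega
    have hg2j : g ⟨2*j, mem2 hj.1 hj.2⟩ = true := by
      rw [← c2, hh, flip3_apply_of_ne _ _ _ _ _ hne]
    have := congrFun hfg ⟨2*j, mem2 hj.1 hj.2⟩
    rw [flip3_apply_of _ _ _ _ _ (by right; left; rfl), c2, hg2j] at this
    exact Bool.false_ne_true this
  · intro habs; exact absurd (Finset.mem_Icc.mpr ⟨hk, hl⟩) habs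

lemma forward2 (i0 : ℤ) (hk : k ≤ i0) (hl : i0 ≤ l) (g : Config (2*k-1) (2*l+1))
    (h1 : g ⟨2*i0-1, mem1 hk hl⟩ = false) (h2 : g ⟨2*i0, mem2 hk hl⟩ = true)
    (h3 : g ⟨2*i0+1, mem3 hk hl⟩ = false) :
    QNic (2*k-1) (2*l+1) k l (e (2*k-1) (2*l+1) (flip3_s5 (2*k-1) (2*l+1) i0 g)) g ≠ 0 := by
  rw [QNic_apply, Finset.sum_eq_single i0]
  · exact qOp_apply_ne_zero (mem1 hk hl) (mem2 hk hl) (mem3 hk hl) _ g h1 h2 h3 rfl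
  · intro j hj hji
    rw [Finset.mem_Icc] at hj
    refine qOp_apply_eq_zero (mem1 hj.1 hj.2) (mem2 hj.1 hj.2) (mem3 hj.1 hj.2) _ g ?_
    rintro ⟨c1, c2, c3, hfg⟩
    have hne : ¬((2*j : ℤ) = 2*i0-1 ∨ (2*j : ℤ) = 2*i0 ∨ (2*j : ℤ) = 2*i0+1) := by omega
    have := congrFun hfg ⟨2*j, mem2 hj.1 hj.2⟩
    rw [flip3_apply_of _ _ _ _ _ (by right; left; rfl), c2,
      flip3_apply_of_ne _ _ _ _ _ hne, c2] at this
    exact Bool.false_ne_true this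
  · intro habs; exact absurd (Finset.mem_Icc.mpr ⟨hk, hl⟩) habs

lemma back1 (g : Config (2*k-1) (2*l+1))
    (hno : ∀ (i : ℤ) (hki : k ≤ i) (hil : i ≤ l), ¬(g ⟨2*i-1, mem1 hki hil⟩ = true ∧
      g ⟨2*i, mem2 hki hil⟩ = false ∧ g ⟨2*i+1, mem3 hki hil⟩ = true))
    (h : Config (2*k-1) (2*l+1)) :
    QNic (2*k-1) (2*l+1) k l (e (2*k-1) (2*l+1) g) h = 0 := by
  rw [QNic_apply]
  refine Finset.sum_eq_zero fun i hi => ?_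
  rw [Finset.mem_Icc] at hi
  refine qOp_apply_eq_zero (mem1 hi.1 hi.2) (mem2 hi.1 hi.2) (mem3 hi.1 hi.2) g h ?_
  rintro ⟨c1, c2, c3, hfg⟩
  refine hno i hi.1 hi.2 ⟨?_, ?_, ?_⟩
  · rw [← hfg, flip3_apply_of _ _ _ _ _ (by left; rfl), c1]; rfl
  · rw [← hfg, flip3_apply_of _ _ _ _ _ (by right; left; rfl), c2]; rfl
  · rw [← hfg, flip3_apply_of _ _ _ _ _ (by right; right; rfl), c3]; rfl

lemma back2 (g : Config (2*k-1) (2*l+1))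
    (hno : ∀ (i : ℤ) (hki : k ≤ i) (hil : i ≤ l), ¬(g ⟨2*i-1, mem1 hki hil⟩ = false ∧
      g ⟨2*i, mem2 hki hil⟩ = true ∧ g ⟨2*i+1, mem3 hki hil⟩ = false))
    (h : Config (2*k-1) (2*l+1)) :
    QNic (2*k-1) (2*l+1) k l (e (2*k-1) (2*l+1) h) g = 0 := by
  rw [QNic_apply]
  refine Finset.sum_eq_zero fun i hi => ?_
  rw [Finset.mem_Icc] at hi
  refine qOp_apply_eq_zero (mem1 hi.1 hi.2) (mem2 hi.1 hi.2) (mem3 hi.1 hi.2) h g ?_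
  rintro ⟨c1, c2, c3, hfg⟩
  exact hno i hi.1 hi.2 ⟨c1, c2, c3⟩

end Main


lemma ext_apply (a b : ℤ) (g : Config a b) (j : ℤ) (m : j ∈ Finset.Icc a b) :
    ext a b g j = g ⟨j, m⟩ := dif_pos m


/-- a classical basis vector on `S = {2k−1, …, 2l+1}` is annihilated by
`Q[k,l]` and `Q[k,l]*` iff its configuration has no forbidden triplet at any even
site `2i` with `k ≤ i ≤ l`. -/
theorem classical_susy_iff_no_forbidden_triplet (k l : ℤ) (hkl : k ≤ l)
    (g : Config (2 * k - 1) (2 * l + 1)) :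
    (QNic (2 * k - 1) (2 * l + 1) k l (e (2 * k - 1) (2 * l + 1) g) = 0 ∧
     LinearMap.adjoint (QNic (2 * k - 1) (2 * l + 1) k l)
       (e (2 * k - 1) (2 * l + 1) g) = 0)
    ↔ ∀ i : ℤ, k ≤ i → i ≤ l → ¬ forbiddenAt (ext (2 * k - 1) (2 * l + 1) g) i := by
  constructor
  · rintro ⟨hQ, hQ'⟩ i hki hil hforb
    have hQh := (vec_eq_zero_iff _ _ _).mp hQ
    have hQ'h : ∀ h : Config (2*k-1) (2*l+1),
        QNic (2*k-1) (2*l+1) k l (e (2*k-1) (2*l+1) h) g = 0 := by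
      intro h
      have h0 := (vec_eq_zero_iff _ _ _).mp hQ' h
      rw [adjoint_e_apply] at h0
      simpa using h0
    rcases hforb with ⟨f1, f2, f3⟩ | ⟨f1, f2, f3⟩
    · exact forward2 i hki hil g
        ((ext_apply _ _ g _ (mem1 hki hil)).symm.trans f1)
        ((ext_apply _ _ g _ (mem2 hki hil)).symm.trans f2)
        ((ext_apply _ _ g _ (mem3 hki hil)).symm.trans f3) (hQ'h _)
    · exact forward1 i hki hil g
        ((ext_apply _ _ g _ (mem1 hki hil)).symm.trans f1)
        ((ext_apply _ _ g _ (mem2 hki hil)).symm.trans f2)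
        ((ext_apply _ _ g _ (mem3 hki hil)).symm.trans f3) (hQh _)
  · intro hno
    constructor
    · rw [vec_eq_zero_iff]
      intro h
      refine back1 g ?_ h
      rintro i hki hil ⟨t1, t2, t3⟩
      exact hno i hki hil (Or.inr ⟨(ext_apply _ _ g _ (mem1 hki hil)).trans t1,
        (ext_apply _ _ g _ (mem2 hki hil)).trans t2,
        (ext_apply _ _ g _ (mem3 hki hil)).trans t3⟩)
    · rw [vec_eq_zero_iff]
      intro h
      rw [adjoint_e_apply]
      have h0 : QNic (2*k-1) (2*l+1) k l (e (2*k-1) (2*l+1) h) g = 0 := by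
        refine back2 g ?_ h
        rintro i hki hil ⟨t1, t2, t3⟩
        exact hno i hki hil (Or.inl ⟨(ext_apply _ _ g _ (mem1 hki hil)).trans t1,
          (ext_apply _ _ g _ (mem2 hki hil)).trans t2,
          (ext_apply _ _ g _ (mem3 hki hil)).trans t3⟩)
      rw [h0]
      simp


end Nicolai
end

section
/- For every natural number n ≥ 1 and every configuration g : {0, 1, …, 2n} → Bool belonging to Υ̂_{0,n}, g is reachable from the all-false configuration on {0, …, 2n} via Ξ̂(0,n). (Every classical open-edge supersymmetric state of the Nicolai model on I_{0,n} can be constructed by finitely many actions of broken local fermion charges upon the Fock vector.) -/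
namespace Nicolai

/-! ### Auxiliary machinery for Statement 7 -/

/-- Flip a configuration on the interval `[2k, 2l]`. -/
def flipI (k l : ℤ) (g : ℤ → Bool) : ℤ → Bool :=
  fun i => if 2 * k ≤ i ∧ i ≤ 2 * l then !(g i) else g i

/-- The charge that flips the current configuration. -/
def chg (g : ℤ → Bool) : ℤ → ℤ := fun i => if g i = true then -1 else 1

lemma chg_eq_neg_one {g : ℤ → Bool} {i : ℤ} : chg g i = -1 ↔ g i = true := by
  unfold chg; cases h : g i <;> simp [h]

lemma chg_eq_one {g : ℤ → Bool} {i : ℤ} : chg g i = 1 ↔ g i = false := by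
  unfold chg; cases h : g i <;> simp [h]

lemma flipI_in {k l i : ℤ} {g : ℤ → Bool} (h1 : 2 * k ≤ i) (h2 : i ≤ 2 * l) :
    flipI k l g i = !(g i) := if_pos ⟨h1, h2⟩

lemma flipI_out {k l i : ℤ} {g : ℤ → Bool} (h : i < 2 * k ∨ 2 * l < i) :
    flipI k l g i = g i := if_neg (by omega)

lemma flipI_invol (k l : ℤ) (g : ℤ → Bool) : flipI k l (flipI k l g) = g := by
  funext i
  unfold flipI
  by_cases h : 2 * k ≤ i ∧ i ≤ 2 * l <;> simp [h]

lemma memXi_chg {k l : ℤ} {g : ℤ → Bool}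
    (htrip : ∀ i : ℤ, k < i → i < l → ¬ forbiddenAt g i)
    (hbk : g (2 * k) = g (2 * k + 1)) (hbl : g (2 * l - 1) = g (2 * l)) :
    memXi k l (chg g) := by
  refine ⟨fun i _ => ?_, fun i h1 h2 => ⟨?_, ?_⟩, ?_, ?_⟩
  · unfold chg; split <;> simp
  · rintro ⟨a, b, c⟩
    exact htrip i h1 h2 (Or.inr ⟨chg_eq_neg_one.mp a, chg_eq_one.mp b, chg_eq_neg_one.mp c⟩)
  · rintro ⟨a, b, c⟩
    exact htrip i h1 h2 (Or.inl ⟨chg_eq_one.mp a, chg_eq_neg_one.mp b, chg_eq_one.mp c⟩)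
  · unfold chg; rw [hbk]
  · unfold chg; rw [hbl]

lemma applicable_chg {k l : ℤ} {g : ℤ → Bool} : applicable k l (chg g) g :=
  fun _ _ _ => ⟨fun h => chg_eq_one.mp h, fun h => chg_eq_neg_one.mp h⟩

lemma applyCharge_chg {k l : ℤ} {g : ℤ → Bool} :
    applyCharge k l (chg g) g = flipI k l g := by
  funext i
  unfold applyCharge flipI
  by_cases h : 2 * k ≤ i ∧ i ≤ 2 * l
  · rw [if_pos h, if_pos h]
    cases hg : g i
    · have : chg g i = 1 := chg_eq_one.mpr hg
      rw [this]; decide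
    · have : chg g i = -1 := chg_eq_neg_one.mpr hg
      rw [this]; decide
  · rw [if_neg h, if_neg h]

/-- A flip of an admissible interval is one `Reachable` step. -/
lemma Reachable.flip {q k l : ℤ} {g₀ g : ℤ → Bool} (h : Reachable 0 q g₀ g)
    (hk : 0 ≤ k) (hkl : k < l) (hl : l ≤ q)
    (htrip : ∀ i : ℤ, k < i → i < l → ¬ forbiddenAt g i)
    (hbk : g (2 * k) = g (2 * k + 1)) (hbl : g (2 * l - 1) = g (2 * l)) :
    Reachable 0 q g₀ (flipI k l g) := by
  have := Reachable.step k l (chg g) h hk hkl hl (memXi_chg htrip hbk hbl) applicable_chg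
  rwa [applyCharge_chg] at this

/-- Flipping an admissible interval preserves membership in `Υ̂_{0,n}`. -/
lemma memUps_flip {n k l : ℤ} {g : ℤ → Bool} (hg : memUps 0 n g)
    (hk : 0 ≤ k) (hkl : k < l) (hl : l ≤ n)
    (hbk : g (2 * k) = g (2 * k + 1)) (hbl : g (2 * l - 1) = g (2 * l)) :
    memUps 0 n (flipI k l g) := by
  obtain ⟨ht, h0, hn'⟩ := hg
  refine ⟨?_, ?_, ?_⟩
  · intro i hi0 hin
    rcases lt_trichotomy i k with h | h | h
    · unfold forbiddenAt
      rw [flipI_out (by omega), flipI_out (by omega), flipI_out (by omega)]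
      exact ht i hi0 hin
    · subst h
      have hkey : flipI i l g (2 * i) = flipI i l g (2 * i + 1) := by
        rw [flipI_in (by omega) (by omega), flipI_in (by omega) (by omega), hbk]
      rintro (⟨-, b, c⟩ | ⟨-, b, c⟩) <;> rw [hkey] at b <;> rw [b] at c <;>
        exact Bool.noConfusion c
    · rcases lt_trichotomy i l with h' | h' | h'
      · rintro (⟨a, b, c⟩ | ⟨a, b, c⟩) <;>
          rw [flipI_in (by omega) (by omega)] at a <;>
          rw [flipI_in (by omega) (by omega)] at b <;>
          rw [flipI_in (by omega) (by omega)] at c <;>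
          simp only [Bool.not_eq_true', Bool.not_eq_false'] at a b c
        · exact ht i hi0 hin (Or.inr ⟨a, b, c⟩)
        · exact ht i hi0 hin (Or.inl ⟨a, b, c⟩)
      · subst h'
        have hkey : flipI k i g (2 * i - 1) = flipI k i g (2 * i) := by
          rw [flipI_in (by omega) (by omega), flipI_in (by omega) (by omega), hbl]
        rintro (⟨a, b, -⟩ | ⟨a, b, -⟩) <;> rw [hkey] at a <;> rw [a] at b <;>
          exact Bool.noConfusion b
      · unfold forbiddenAt
        rw [flipI_out (by omega), flipI_out (by omega), flipI_out (by omega)]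
        exact ht i hi0 hin
  · by_cases hk0 : k = 0
    · subst hk0
      rw [flipI_in (by omega) (by omega), flipI_in (by omega) (by omega), h0]
    · rw [flipI_out (by omega), flipI_out (by omega)]
      exact h0
  · by_cases hln : l = n
    · subst hln
      rw [flipI_in (by omega) (by omega), flipI_in (by omega) (by omega), hn']
    · rw [flipI_out (by omega), flipI_out (by omega)]
      exact hn'

lemma supp_flip {n k l : ℤ} {g : ℤ → Bool}
    (hs : ∀ i : ℤ, i ∉ Finset.Icc (0 : ℤ) (2 * n) → g i = false)
    (hk : 0 ≤ k) (hl : l ≤ n) :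
    ∀ i : ℤ, i ∉ Finset.Icc (0 : ℤ) (2 * n) → flipI k l g i = false := by
  intro i hi
  rw [Finset.mem_Icc] at hi
  rw [flipI_out (by omega)]
  exact hs i (by rw [Finset.mem_Icc]; omega)

/-- Measure: one plus the rightmost occupied site (0 if empty). -/
noncomputable def mu (n : ℤ) (g : ℤ → Bool) : ℕ :=
  (((Finset.Icc (0 : ℤ) (2 * n))).filter (fun i => g i = true)).sup
    (fun i => (i + 1).toNat)

lemma le_mu {n : ℤ} {g : ℤ → Bool} {i : ℤ} (h1 : i ∈ Finset.Icc (0 : ℤ) (2 * n))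
    (h2 : g i = true) : (i + 1).toNat ≤ mu n g := by
  unfold mu
  have hmem : i ∈ (Finset.Icc (0 : ℤ) (2 * n)).filter (fun i => g i = true) := by
    rw [Finset.mem_filter]; exact ⟨h1, h2⟩
  exact Finset.le_sup (f := fun i : ℤ => (i + 1).toNat) hmem

lemma eq_allFalse_of_mu_zero {n : ℤ} {g : ℤ → Bool}
    (hs : ∀ i : ℤ, i ∉ Finset.Icc (0 : ℤ) (2 * n) → g i = false)
    (h0 : mu n g = 0) : g = (fun _ => false) := by
  funext i
  by_cases hi : i ∈ Finset.Icc (0 : ℤ) (2 * n)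
  · cases hgi : g i
    · rfl
    · have h1 := le_mu hi hgi
      have h2 := (Finset.mem_Icc.mp hi).1
      omega
  · exact hs i hi

/-- Main auxiliary induction: strong induction on the rightmost occupied site. -/
lemma aux_reach (n : ℤ) (hn : 1 ≤ n) :
    ∀ m : ℕ, ∀ g : ℤ → Bool,
      (∀ i : ℤ, i ∉ Finset.Icc (0 : ℤ) (2 * n) → g i = false) →
      memUps 0 n g → mu n g ≤ m → Reachable 0 n (fun _ => false) g := by
  intro m
  induction m with
  | zero =>
    intro g hs hg hm
    rw [eq_allFalse_of_mu_zero hs (Nat.le_zero.mp hm)]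
    exact Reachable.refl _
  | succ m ih =>
    intro g hs hg hm
    by_cases h0 : mu n g = 0
    · rw [eq_allFalse_of_mu_zero hs h0]
      exact Reachable.refl _
    -- extract the rightmost occupied site s
    have hne : ((Finset.Icc (0 : ℤ) (2 * n)).filter (fun i => g i = true)).Nonempty := by
      by_contra h
      rw [Finset.not_nonempty_iff_eq_empty] at h
      unfold mu at h0
      rw [h] at h0
      simp at h0
    obtain ⟨s, hsmem, hseq⟩ := Finset.exists_mem_eq_sup _ hne (fun i => (i + 1).toNat)
    rw [Finset.mem_filter, Finset.mem_Icc] at hsmem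
    obtain ⟨⟨hs0, hs2n⟩, hstrue⟩ := hsmem
    have hmus : mu n g = (s + 1).toNat := hseq
    have hmax : ∀ j : ℤ, g j = true → j ≤ s := by
      intro j hj
      have hjm : j ∈ Finset.Icc (0 : ℤ) (2 * n) := by
        by_contra hh
        rw [hs j hh] at hj
        exact Bool.noConfusion hj
      have h1 := le_mu (n := n) hjm hj
      have h2 := (Finset.mem_Icc.mp hjm).1
      rw [hmus] at h1
      omega
    have hsm : s ≤ m := by omega
    have h01 : g 0 = g 1 := by
      have := hg.2.1
      norm_num at this
      exact this
    rcases Int.even_or_odd s with ⟨l, hlodd⟩ | ⟨t, htodd⟩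
    · -- s = 2l even
      have hseven : s = 2 * l := by omega
      have hl1 : 1 ≤ l := by
        by_contra hcon
        have hs00 : s = 0 := by omega
        have : g 1 = true := by rw [← h01, ← hs00]; exact hstrue
        have := hmax 1 this
        omega
      have hln : l ≤ n := by omega
      have hgs1 : g (s - 1) = true := by
        rcases eq_or_lt_of_le hln with hle | hlt
        · have h2n : g (2 * n - 1) = g (2 * n) := hg.2.2
          have e1 : (2 : ℤ) * n - 1 = s - 1 := by omega
          have e2 : (2 : ℤ) * n = s := by omega
          rw [e1, e2] at h2n
          rw [h2n]; exact hstrue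
        · cases hgs1' : g (s - 1)
          · exfalso
            have hsp : g (s + 1) = false := by
              cases hsp' : g (s + 1)
              · rfl
              · have := hmax _ hsp'; omega
            refine hg.1 l (by omega) hlt (Or.inl ⟨?_, ?_, ?_⟩)
            · rw [show 2 * l - 1 = s - 1 by omega]; exact hgs1'
            · rw [show 2 * l = s by omega]; exact hstrue
            · rw [show 2 * l + 1 = s + 1 by omega]; exact hsp
          · rfl
      have hbk : g (2 * 0) = g (2 * 0 + 1) := hg.2.1
      have hbl : g (2 * l - 1) = g (2 * l) := by
        rw [show 2 * l - 1 = s - 1 by omega, show 2 * l = s by omega, hgs1, hstrue]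
      have hg1 : memUps 0 n (flipI 0 l g) := memUps_flip ⟨hg.1, hg.2.1, hg.2.2⟩ le_rfl hl1 hln hbk hbl
      have hs1 : ∀ i : ℤ, i ∉ Finset.Icc (0 : ℤ) (2 * n) → flipI 0 l g i = false :=
        supp_flip hs le_rfl hln
      have hmu1 : mu n (flipI 0 l g) ≤ m := by
        apply Finset.sup_le
        intro i hi
        rw [Finset.mem_filter, Finset.mem_Icc] at hi
        obtain ⟨⟨hi0, hi2n⟩, hitrue⟩ := hi
        by_cases hin : 2 * 0 ≤ i ∧ i ≤ 2 * l
        · rw [flipI_in hin.1 hin.2] at hitrue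
          have hif : g i = false := by
            cases hgi : g i
            · rfl
            · rw [hgi] at hitrue; exact Bool.noConfusion hitrue
          have hine : i ≠ s := by
            intro h; rw [h, hstrue] at hif; exact Bool.noConfusion hif
          omega
        · exfalso
          rw [flipI_out (by omega)] at hitrue
          have := hmax i hitrue
          omega
      have hreach1 := ih (flipI 0 l g) hs1 hg1 hmu1
      have htrip1 : ∀ i : ℤ, 0 < i → i < l → ¬ forbiddenAt (flipI 0 l g) i :=
        fun i a b => hg1.1 i a (lt_of_lt_of_le b hln)
      have hbk1 : flipI 0 l g (2 * 0) = flipI 0 l g (2 * 0 + 1) := hg1.2.1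
      have hbl1 : flipI 0 l g (2 * l - 1) = flipI 0 l g (2 * l) := by
        rw [flipI_in (by omega) (by omega), flipI_in (by omega) (by omega), hbl]
      have := Reachable.flip hreach1 le_rfl hl1 hln htrip1 hbk1 hbl1
      rwa [flipI_invol] at this
    · -- s = 2t+1 odd
      have hsodd : s = 2 * t + 1 := htodd
      have ht0 : 0 ≤ t := by omega
      have hsne : s ≠ 2 * n - 1 := by
        intro h
        have h2n : g (2 * n - 1) = g (2 * n) := hg.2.2
        have hf : g (2 * n) = false := by
          cases hh : g (2 * n)
          · rfl
          · have := hmax _ hh; omega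
        rw [← h, hstrue, hf] at h2n
        exact Bool.noConfusion h2n
      have hs3 : s + 3 ≤ 2 * n := by omega
      set l : ℤ := t + 2 with hldef
      set k₂ : ℤ := t + 1 with hk2def
      have hln : l ≤ n := by omega
      have f1 : g (s + 1) = false := by
        cases hh : g (s + 1)
        · rfl
        · exact absurd (hmax _ hh) (by omega)
      have f2 : g (s + 2) = false := by
        cases hh : g (s + 2)
        · rfl
        · exact absurd (hmax _ hh) (by omega)
      have f3 : g (s + 3) = false := by
        cases hh : g (s + 3)
        · rfl
        · exact absurd (hmax _ hh) (by omega)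
      have hbk : g (2 * 0) = g (2 * 0 + 1) := hg.2.1
      have hbl : g (2 * l - 1) = g (2 * l) := by
        rw [show 2 * l - 1 = s + 2 by omega, show 2 * l = s + 3 by omega, f2, f3]
      -- g' = flipI 0 l g
      have hg' : memUps 0 n (flipI 0 l g) :=
        memUps_flip ⟨hg.1, hg.2.1, hg.2.2⟩ le_rfl (by omega) hln hbk hbl
      have hs' : ∀ i : ℤ, i ∉ Finset.Icc (0 : ℤ) (2 * n) → flipI 0 l g i = false :=
        supp_flip hs le_rfl hln
      have e1 : flipI 0 l g (s + 1) = !(g (s + 1)) := flipI_in (by omega) (by omega)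
      have e2 : flipI 0 l g (s + 2) = !(g (s + 2)) := flipI_in (by omega) (by omega)
      have e3 : flipI 0 l g (s + 3) = !(g (s + 3)) := flipI_in (by omega) (by omega)
      have hbk2 : flipI 0 l g (2 * k₂) = flipI 0 l g (2 * k₂ + 1) := by
        rw [show 2 * k₂ + 1 = s + 2 by omega, show 2 * k₂ = s + 1 by omega, e1, e2, f1, f2]
      have hbl2 : flipI 0 l g (2 * l - 1) = flipI 0 l g (2 * l) := by
        rw [show 2 * l - 1 = s + 2 by omega, show 2 * l = s + 3 by omega, e2, e3, f2, f3]
      -- g'' = flipI k₂ l (flipI 0 l g)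
      have hg'' : memUps 0 n (flipI k₂ l (flipI 0 l g)) :=
        memUps_flip hg' (by omega) (by omega) hln hbk2 hbl2
      have hs'' : ∀ i : ℤ, i ∉ Finset.Icc (0 : ℤ) (2 * n) →
          flipI k₂ l (flipI 0 l g) i = false :=
        supp_flip hs' (by omega) hln
      have hmu'' : mu n (flipI k₂ l (flipI 0 l g)) ≤ m := by
        apply Finset.sup_le
        intro i hi
        rw [Finset.mem_filter, Finset.mem_Icc] at hi
        obtain ⟨⟨hi0, hi2n⟩, hitrue⟩ := hi
        by_cases hc1 : 2 * k₂ ≤ i ∧ i ≤ 2 * l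
        · exfalso
          rw [flipI_in hc1.1 hc1.2, flipI_in (by omega) (by omega)] at hitrue
          simp only [Bool.not_not] at hitrue
          have := hmax i hitrue
          omega
        · by_cases hc2 : 2 * 0 ≤ i ∧ i ≤ 2 * l
          · rw [flipI_out (by omega), flipI_in hc2.1 hc2.2] at hitrue
            have hif : g i = false := by
              cases hgi : g i
              · rfl
              · rw [hgi] at hitrue; exact Bool.noConfusion hitrue
            have hine : i ≠ s := by
              intro h; rw [h, hstrue] at hif; exact Bool.noConfusion hif
            have hile : i ≤ s := by omega
            omega
          · exfalso
            rw [flipI_out (by omega), flipI_out (by omega)] at hitrue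
            have := hmax i hitrue
            omega
      have hreach'' := ih _ hs'' hg'' hmu''
      -- first forward step: flip [2k₂, 2l] back, recovering flipI 0 l g
      have htripA : ∀ i : ℤ, k₂ < i → i < l → ¬ forbiddenAt (flipI k₂ l (flipI 0 l g)) i :=
        fun i a b => hg''.1 i (by omega) (lt_of_lt_of_le b hln)
      have ee1 : flipI k₂ l (flipI 0 l g) (s + 1) = g (s + 1) := by
        rw [flipI_in (by omega) (by omega), e1, Bool.not_not]
      have ee2 : flipI k₂ l (flipI 0 l g) (s + 2) = g (s + 2) := by
        rw [flipI_in (by omega) (by omega), e2, Bool.not_not]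
      have ee3 : flipI k₂ l (flipI 0 l g) (s + 3) = g (s + 3) := by
        rw [flipI_in (by omega) (by omega), e3, Bool.not_not]
      have hbkA : flipI k₂ l (flipI 0 l g) (2 * k₂) = flipI k₂ l (flipI 0 l g) (2 * k₂ + 1) := by
        rw [show 2 * k₂ + 1 = s + 2 by omega, show 2 * k₂ = s + 1 by omega, ee1, ee2, f1, f2]
      have hblA : flipI k₂ l (flipI 0 l g) (2 * l - 1) = flipI k₂ l (flipI 0 l g) (2 * l) := by
        rw [show 2 * l - 1 = s + 2 by omega, show 2 * l = s + 3 by omega, ee2, ee3, f2, f3]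
      have hstepA := Reachable.flip hreach'' (by omega) (by omega) hln htripA hbkA hblA
      rw [flipI_invol] at hstepA
      -- second forward step: flip [0, 2l] back, recovering g
      have htripB : ∀ i : ℤ, 0 < i → i < l → ¬ forbiddenAt (flipI 0 l g) i :=
        fun i a b => hg'.1 i a (lt_of_lt_of_le b hln)
      have hbkB : flipI 0 l g (2 * 0) = flipI 0 l g (2 * 0 + 1) := hg'.2.1
      have hstepB := Reachable.flip hstepA le_rfl (by omega) hln htripB hbkB hbl2
      rwa [flipI_invol] at hstepB

/-- every configuration in `Υ̂_{0,n}` is reachable from the all-false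
(Fock) configuration on `{0, …, 2n}` via charges from `Ξ̂(0,n)`. -/
theorem ups_reachable_from_fock (n : ℕ) (hn : 1 ≤ n) (g : ℤ → Bool)
    (hsupp : ∀ i : ℤ, i ∉ Finset.Icc (0 : ℤ) (2 * (n : ℤ)) → g i = false)
    (hg : memUps 0 (n : ℤ) g) :
    Reachable 0 (n : ℤ) (fun _ => false) g := by
  exact aux_reach (n : ℤ) (by exact_mod_cast hn) (mu (n : ℤ) g) g hsupp hg le_rfl

end Nicolai
end

section
/- For every natural number n ≥ 1, the number of configurations g : {0, 1, …, 2n} → Bool belonging to Υ̂_{0,n} equals 2 · 3^{n−1}. (The number of classical open-edge supersymmetric ground states of the Nicolai model on I_{0,n} is 2 · 3^{n−1}.) -/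
namespace Nicolai

/-! ### Auxiliary development for the counting theorem -/

/-- Allowed transition: given the previous odd-site value `b`, the next pair `q`
may be anything except `(!b, b)` (which would create a forbidden triplet). -/
abbrev ok (b : Bool) (q : Bool × Bool) : Prop := q ≠ (!b, b)

/-- Valid pair sequences: first pair diagonal, consecutive pairs compatible. -/
abbrev Valid (n : ℕ) (p : Fin n → Bool × Bool) : Prop :=
  (∀ i : Fin n, i.1 = 0 → (p i).1 = (p i).2) ∧
  (∀ i j : Fin n, j.1 = i.1 + 1 → ok (p i).2 (p j))

lemma x_congr {α : Type*} {n : ℕ} (x : Fin n → α) {a b : ℕ} (hab : a = b)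
    (ha : a < n) (hb : b < n) : x ⟨a, ha⟩ = x ⟨b, hb⟩ := by subst hab; rfl

lemma card_ok (b : Bool) : Fintype.card {q : Bool × Bool // ok b q} = 3 := by
  cases b <;> decide

lemma not_forbidden_iff (g : ℤ → Bool) (j : ℤ) :
    ¬ forbiddenAt g j ↔ ok (g (2 * j - 1)) (g (2 * j), g (2 * j + 1)) := by
  unfold forbiddenAt ok
  cases g (2 * j - 1) <;> cases g (2 * j) <;> cases g (2 * j + 1) <;> simp

lemma sig_ext {m : ℕ}
    {x y : Σ x : {p : Fin (m + 1) → Bool × Bool // Valid (m + 1) p},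
      {q : Bool × Bool // ok (x.1 (Fin.last m)).2 q}}
    (h1 : x.1.1 = y.1.1) (h2 : x.2.1 = y.2.1) : x = y := by
  obtain ⟨⟨a, ha⟩, ⟨b, hb⟩⟩ := x
  obtain ⟨⟨c, hc⟩, ⟨d, hd⟩⟩ := y
  simp only at h1 h2
  subst h1; subst h2
  rfl

/-- Peeling off the last pair of a valid sequence. -/
def stepEquiv (m : ℕ) :
    {p : Fin (m + 2) → Bool × Bool // Valid (m + 2) p} ≃
    Σ x : {p : Fin (m + 1) → Bool × Bool // Valid (m + 1) p},
      {q : Bool × Bool // ok (x.1 (Fin.last m)).2 q} where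
  toFun p :=
    ⟨⟨Fin.init p.1, by
        constructor
        · intro i hi
          exact p.2.1 i.castSucc (by simpa using hi)
        · intro i j hj
          exact p.2.2 i.castSucc j.castSucc (by simpa using hj)⟩,
     ⟨p.1 (Fin.last (m + 1)), by
        exact p.2.2 (Fin.last m).castSucc (Fin.last (m + 1)) (by simp)⟩⟩
  invFun x :=
    ⟨Fin.snoc x.1.1 x.2.1, by
      constructor
      · intro i hi
        have hi' : i = Fin.castSucc ⟨0, by omega⟩ := Fin.ext (by simpa using hi)
        rw [hi', Fin.snoc_castSucc]
        exact x.1.2.1 _ rfl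
      · intro i j hj
        have hj2 := j.isLt
        have hi1 : i.1 < m + 1 := by omega
        have hi' : i = Fin.castSucc ⟨i.1, hi1⟩ := Fin.ext rfl
        by_cases hjm : j.1 < m + 1
        · have hj' : j = Fin.castSucc ⟨j.1, hjm⟩ := Fin.ext rfl
          rw [hi', hj', Fin.snoc_castSucc, Fin.snoc_castSucc]
          exact x.1.2.2 _ _ (by simpa using hj)
        · have hj' : j = Fin.last (m + 1) := Fin.ext (by simp; omega)
          have hi'' : i = Fin.castSucc (Fin.last m) := Fin.ext (by simp; omega)
          rw [hi'', hj', Fin.snoc_castSucc, Fin.snoc_last]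
          exact x.2.2⟩
  left_inv p := Subtype.ext (Fin.snoc_init_self p.1)
  right_inv x := by
    refine sig_ext ?_ ?_
    · exact Fin.init_snoc (α := fun _ : Fin (m + 2) => Bool × Bool) (p := x.1.1) (x := x.2.1)
    · exact Fin.snoc_last (α := fun _ : Fin (m + 2) => Bool × Bool) (p := x.1.1) (x := x.2.1)

lemma cardV : ∀ m : ℕ,
    Fintype.card {p : Fin (m + 1) → Bool × Bool // Valid (m + 1) p} = 2 * 3 ^ m
  | 0 => by decide
  | (m + 1) => by
    rw [Fintype.card_congr (stepEquiv m), Fintype.card_sigma]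
    simp only [card_ok]
    rw [Finset.sum_const, smul_eq_mul, Finset.card_univ, cardV m]
    ring

/-- Forward map: read off the pairs of a configuration. -/
def fwd (n : ℕ) (g : ℤ → Bool) : Fin n → Bool × Bool :=
  fun i => (g (2 * (i.1 : ℤ)), g (2 * (i.1 : ℤ) + 1))

lemma fwd_valid (n : ℕ) (g : ℤ → Bool) (hg : memUps 0 (n : ℤ) g) :
    Valid n (fwd n g) := by
  obtain ⟨hint, hleft, _⟩ := hg
  constructor
  · intro i hi
    have h0 : (i.1 : ℤ) = 0 := by exact_mod_cast hi
    show g (2 * (i.1 : ℤ)) = g (2 * (i.1 : ℤ) + 1)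
    rw [h0]
    exact hleft
  · intro i j hj
    have h1 : (0 : ℤ) < (j.1 : ℤ) := by exact_mod_cast Nat.pos_of_ne_zero (by omega)
    have h2 : (j.1 : ℤ) < (n : ℤ) := by exact_mod_cast j.isLt
    have hok := (not_forbidden_iff g (j.1 : ℤ)).mp (hint (j.1 : ℤ) h1 h2)
    have he : 2 * (j.1 : ℤ) - 1 = 2 * (i.1 : ℤ) + 1 := by
      have : (j.1 : ℤ) = (i.1 : ℤ) + 1 := by exact_mod_cast hj
      rw [this]; ring
    rw [he] at hok
    exact hok

/-- Decoding map: build a configuration from a valid pair sequence. -/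
def dec (n : ℕ) (x : Fin n → Bool × Bool) : ℤ → Bool := fun j =>
  if h : 0 ≤ j ∧ j < 2 * (n : ℤ) then
    if j % 2 = 0 then (x ⟨(j / 2).toNat, by omega⟩).1 else (x ⟨(j / 2).toNat, by omega⟩).2
  else if h2 : j = 2 * (n : ℤ) ∧ 1 ≤ n then (x ⟨n - 1, by omega⟩).2 else false

lemma dec_eq_false (n : ℕ) (x : Fin n → Bool × Bool) (j : ℤ)
    (h : j < 0 ∨ 2 * (n : ℤ) < j) : dec n x j = false := by
  unfold dec
  rw [dif_neg (by omega), dif_neg (by omega)]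

lemma dec_even (n : ℕ) (x : Fin n → Bool × Bool) (i : ℤ) (h0 : 0 ≤ i) (h1 : i < (n : ℤ)) :
    dec n x (2 * i) = (x ⟨i.toNat, by omega⟩).1 := by
  unfold dec
  rw [dif_pos (by omega), if_pos (by omega)]
  exact congrArg Prod.fst (x_congr x (by omega) _ _)

lemma dec_odd (n : ℕ) (x : Fin n → Bool × Bool) (i : ℤ) (h0 : 0 ≤ i) (h1 : i < (n : ℤ)) :
    dec n x (2 * i + 1) = (x ⟨i.toNat, by omega⟩).2 := by
  unfold dec
  rw [dif_pos (by omega), if_neg (by omega)]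
  exact congrArg Prod.snd (x_congr x (by omega) _ _)

lemma dec_last (n : ℕ) (x : Fin n → Bool × Bool) (hn : 1 ≤ n) :
    dec n x (2 * (n : ℤ)) = (x ⟨n - 1, by omega⟩).2 := by
  unfold dec
  rw [dif_neg (by omega), dif_pos ⟨rfl, hn⟩]

lemma card_main (n : ℕ) (hn : 1 ≤ n) :
    Nat.card {g : ℤ → Bool //
        (∀ i : ℤ, i ∉ Finset.Icc (0 : ℤ) (2 * (n : ℤ)) → g i = false) ∧
        memUps 0 (n : ℤ) g}
      = Fintype.card {p : Fin n → Bool × Bool // Valid n p} := by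
  have hnz : (0 : ℤ) < (n : ℤ) := by exact_mod_cast hn
  rw [← Nat.card_eq_fintype_card]
  refine Nat.card_eq_of_bijective
    (fun g : {g : ℤ → Bool //
        (∀ i : ℤ, i ∉ Finset.Icc (0 : ℤ) (2 * (n : ℤ)) → g i = false) ∧
        memUps 0 (n : ℤ) g} => (⟨fwd n g.1, fwd_valid n g.1 g.2.2⟩ :
      {p : Fin n → Bool × Bool // Valid n p})) ⟨?_, ?_⟩
  · -- injective
    rintro ⟨a, ha⟩ ⟨b, hb⟩ h
    have hF : fwd n a = fwd n b := congrArg Subtype.val h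
    have key : ∀ m : ℕ, m < n →
        a (2 * (m : ℤ)) = b (2 * (m : ℤ)) ∧ a (2 * (m : ℤ) + 1) = b (2 * (m : ℤ) + 1) := by
      intro m hm
      have := congrFun hF ⟨m, hm⟩
      exact ⟨congrArg Prod.fst this, congrArg Prod.snd this⟩
    apply Subtype.ext
    funext j
    show a j = b j
    by_cases hj : 0 ≤ j ∧ j ≤ 2 * (n : ℤ)
    · by_cases hj2 : j = 2 * (n : ℤ)
      · subst hj2
        rw [← ha.2.2.2, ← hb.2.2.2]
        have e : 2 * (n : ℤ) - 1 = 2 * (((n - 1 : ℕ) : ℕ) : ℤ) + 1 := by omega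
        rw [e]
        exact (key (n - 1) (by omega)).2
      · have hlt : j < 2 * (n : ℤ) := by omega
        rcases Int.emod_two_eq_zero_or_one j with hp | hp
        · have e : j = 2 * (((j / 2).toNat : ℕ) : ℤ) := by omega
          rw [e]
          exact (key (j / 2).toNat (by omega)).1
        · have e : j = 2 * (((j / 2).toNat : ℕ) : ℤ) + 1 := by omega
          rw [e]
          exact (key (j / 2).toNat (by omega)).2
    · rw [ha.1 j (by simp only [Finset.mem_Icc]; omega),
        hb.1 j (by simp only [Finset.mem_Icc]; omega)]
  · -- surjective
    rintro ⟨x, hx⟩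
    refine ⟨⟨dec n x, ?_, ?_, ?_, ?_⟩, ?_⟩
    · intro j hj
      simp only [Finset.mem_Icc] at hj
      exact dec_eq_false n x j (by omega)
    · -- no forbidden triplets
      intro i h0 h1
      rw [not_forbidden_iff]
      have e1 : 2 * i - 1 = 2 * (i - 1) + 1 := by ring
      rw [e1, dec_odd n x (i - 1) (by omega) (by omega),
        dec_even n x i (by omega) (by omega), dec_odd n x i (by omega) (by omega),
        Prod.mk.eta]
      exact hx.2 ⟨(i - 1).toNat, by omega⟩ ⟨i.toNat, by omega⟩
        (by show i.toNat = (i - 1).toNat + 1; omega)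
    · -- left boundary
      rw [dec_even n x 0 le_rfl hnz, dec_odd n x 0 le_rfl hnz]
      exact hx.1 ⟨(0 : ℤ).toNat, by omega⟩ rfl
    · -- right boundary
      have e : 2 * (n : ℤ) - 1 = 2 * ((n : ℤ) - 1) + 1 := by ring
      rw [e, dec_odd n x ((n : ℤ) - 1) (by omega) (by omega), dec_last n x hn]
      exact congrArg Prod.snd (x_congr x (by omega) _ _)
    · -- round trip
      apply Subtype.ext
      funext i
      show (dec n x (2 * (i.1 : ℤ)), dec n x (2 * (i.1 : ℤ) + 1)) = x i
      have hi0 : (0 : ℤ) ≤ (i.1 : ℤ) := Int.natCast_nonneg _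
      have hi1 : (i.1 : ℤ) < (n : ℤ) := by exact_mod_cast i.isLt
      rw [dec_even n x _ hi0 hi1, dec_odd n x _ hi0 hi1]
      have hmk : (⟨((i.1 : ℤ)).toNat, by omega⟩ : Fin n) = i := Fin.ext (by show ((i.1 : ℤ)).toNat = i.1; omega)
      rw [hmk]

/-- the number of configurations on `{0, …, 2n}` belonging to `Υ̂_{0,n}`
is `2 · 3^{n−1}`. -/
theorem card_open_edge_susy_states (n : ℕ) (hn : 1 ≤ n) :
    {g : ℤ → Bool |
        (∀ i : ℤ, i ∉ Finset.Icc (0 : ℤ) (2 * (n : ℤ)) → g i = false) ∧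
        memUps 0 (n : ℤ) g}.ncard
      = 2 * 3 ^ (n - 1) := by
  obtain ⟨m, rfl⟩ : ∃ m, n = m + 1 := ⟨n - 1, by omega⟩
  rw [← Nat.card_coe_set_eq, Set.coe_setOf]
  rw [card_main (m + 1) (by omega), cardV m]
  simp

end Nicolai
end
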